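/- arXiv:0706.0685 — 2 statements merged into one kernel-verified Lean document; each statement's English description precedes it below -/
import Mathlib

section
/- Let X be a random variable taking values in D with density p_X (strictly positive on D), let Z be a real random variable independent of X with E[Z] = 0 and |Z| ≤ b almost surely, and let T be uniformly distributed on [−c, c] with c = a + b, independent of (X, Z). If f : D → [−a, a] is measurable and φ : D → ℂ is square-integrable, then E[ (φ*(X) / p_X(X)) · sgn(f(X) + Z − T) ] = (1/c) ⟨f, φ⟩, where ⟨f, φ⟩ = ∫_D f(x) φ*(x) dx and sgn(u) = +1 if u > 0 and −1 if u ≤ 0. -/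
open MeasureTheory ProbabilityTheory Filter
open scoped ENNReal Topology

noncomputable section

/-- Sign function: `+1` if `u > 0` and `-1` otherwise. -/
def sgn' (u : ℝ) : ℝ := if 0 < u then 1 else -1

/-- Binary-quantized observation of sensor `i`: `B i = sgn (f (X i) + Z i - T i)`. -/
def obsB {E Ω : Type*} (f : E → ℝ) (X : ℕ → Ω → E) (Z T : ℕ → Ω → ℝ)
    (i : ℕ) (ω : Ω) : ℝ :=
  sgn' (f (X i ω) + Z i ω - T i ω)

/-- Estimate of the `j`-th coefficient from the first `n` sensors:
`α̂_j = (c/n) ∑_{i<n} (φ_j(X_i))^* / p_X(X_i) * B_i`. -/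
def alphaHat {E Ω : Type*} (c : ℝ) (pX : E → ℝ) (φ : ℕ → E → ℂ) (f : E → ℝ)
    (X : ℕ → Ω → E) (Z T : ℕ → Ω → ℝ) (n j : ℕ) (ω : Ω) : ℂ :=
  ((c : ℂ) / (n : ℂ)) * ∑ i ∈ Finset.range n,
    (starRingEnd ℂ) (φ j (X i ω)) / (pX (X i ω) : ℂ) * (obsB f X Z T i ω : ℂ)

/-- The `j`-th coefficient of the field `f`: `α_j = ⟨f, φ_j⟩ = ∫_D f (φ_j)^*`. -/
def coeff {E : Type*} [MeasureSpace E] (D : Set E) (f : E → ℝ) (φ : ℕ → E → ℂ)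
    (j : ℕ) : ℂ :=
  ∫ x in D, (f x : ℂ) * (starRingEnd ℂ) (φ j x)

/-- The `m`-term field estimate `f̂_{n,m} = ∑_{j<m} α̂_j φ_j`. -/
def fieldEst {E Ω : Type*} (c : ℝ) (pX : E → ℝ) (φ : ℕ → E → ℂ) (f : E → ℝ)
    (X : ℕ → Ω → E) (Z T : ℕ → Ω → ℝ) (n m : ℕ) (x : E) (ω : Ω) : ℂ :=
  ∑ j ∈ Finset.range m, alphaHat c pX φ f X Z T n j ω * φ j x

/-- The `m`-term approximation `f_m = ∑_{j<m} α_j φ_j`. -/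
def mApprox {E : Type*} [MeasureSpace E] (D : Set E) (f : E → ℝ) (φ : ℕ → E → ℂ)
    (m : ℕ) (x : E) : ℂ :=
  ∑ j ∈ Finset.range m, coeff D f φ j * φ j x

/-- The integrated mean squared error `E[‖f - f̂_{n,m}‖²]`. -/
def intMSE {E Ω : Type*} [MeasureSpace E] [MeasurableSpace Ω] (P : Measure Ω)
    (D : Set E) (c : ℝ) (pX : E → ℝ) (φ : ℕ → E → ℂ) (f : E → ℝ)
    (X : ℕ → Ω → E) (Z T : ℕ → Ω → ℝ) (n m : ℕ) : ℝ :=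
  ∫ ω, (∫ x in D, ‖(f x : ℂ) - fieldEst c pX φ f X Z T n m x ω‖ ^ 2) ∂P

/-- The `m`-term approximation error `ε[f,m] = ∑_{j≥m} |α_j|²`. -/
def tailErr {E : Type*} [MeasureSpace E] (D : Set E) (f : E → ℝ) (φ : ℕ → E → ℂ)
    (m : ℕ) : ℝ :=
  ∑' j : ℕ, ‖coeff D f φ (m + j)‖ ^ 2

/-- The deployment distribution: density `p_X` (w.r.t. Lebesgue measure) on `D`. -/
def deployLaw {E : Type*} [MeasureSpace E] (D : Set E) (pX : E → ℝ) : Measure E :=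
  (volume.restrict D).withDensity fun x => ENNReal.ofReal (pX x)

/-- The threshold distribution: uniform on `[-c, c]`. -/
def threshLaw (c : ℝ) : Measure ℝ :=
  (ENNReal.ofReal (1 / (2 * c))) • volume.restrict (Set.Icc (-c) c)

end


lemma sgn'_meas : Measurable sgn' :=
  Measurable.ite (measurableSet_lt measurable_const measurable_id) measurable_const
    measurable_const

lemma sgn'_abs (u : ℝ) : |sgn' u| = 1 := by
  unfold sgn'; split <;> norm_num

lemma sgn'_norm_eq (u : ℝ) : ‖(sgn' u : ℂ)‖ = 1 := by
  rw [Complex.norm_real]; unfold sgn'; split <;> norm_num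

lemma lemA {c u : ℝ} (hc : 0 < c) (h1 : -c ≤ u) (h2 : u ≤ c) :
    ∫ t, sgn' (u - t) ∂(threshLaw c) = u / c := by
  have hsplit : Set.Ico (-c) u ∪ Set.Icc u c = Set.Icc (-c) c :=
    Set.Ico_union_Icc_eq_Icc h1 h2
  have hdisj : Disjoint (Set.Ico (-c) u) (Set.Icc u c) := by
    rw [Set.disjoint_left]; rintro t ⟨_, h⟩ ⟨h', _⟩; exact absurd h' (not_le.mpr h)
  have e1 : Set.EqOn (fun _ => (1 : ℝ)) (fun t => sgn' (u - t)) (Set.Ico (-c) u) := by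
    intro t ht; simp only [sgn']
    rw [if_pos (by linarith [ht.2] : (0:ℝ) < u - t)]
  have e2 : Set.EqOn (fun _ => (-1 : ℝ)) (fun t => sgn' (u - t)) (Set.Icc u c) := by
    intro t ht; simp only [sgn']
    rw [if_neg (by simp only [not_lt]; linarith [ht.1] : ¬ (0:ℝ) < u - t)]
  have hvol1 : volume (Set.Ico (-c) u) < ⊤ := by simp [Real.volume_Ico]
  have hvol2 : volume (Set.Icc u c) < ⊤ := by simp [Real.volume_Icc]
  have i1 : IntegrableOn (fun t => sgn' (u - t)) (Set.Ico (-c) u) :=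
    (integrableOn_const hvol1.ne).congr_fun e1 measurableSet_Ico
  have i2 : IntegrableOn (fun t => sgn' (u - t)) (Set.Icc u c) :=
    (integrableOn_const hvol2.ne).congr_fun e2 measurableSet_Icc
  have hset : ∫ t in Set.Icc (-c) c, sgn' (u - t) = 2 * u := by
    rw [← hsplit, setIntegral_union hdisj measurableSet_Icc i1 i2,
      ← setIntegral_congr_fun measurableSet_Ico e1,
      ← setIntegral_congr_fun measurableSet_Icc e2,
      setIntegral_const, setIntegral_const, measureReal_def, measureReal_def, Real.volume_Ico, Real.volume_Icc,
      ENNReal.toReal_ofReal (by linarith), ENNReal.toReal_ofReal (by linarith)]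
    simp only [smul_eq_mul]
    ring
  rw [threshLaw, integral_smul_measure, hset,
    ENNReal.toReal_ofReal (by positivity)]
  have : c ≠ 0 := ne_of_gt hc
  rw [smul_eq_mul]
  field_simp

/-- **Expectation identity for a single binary observation.**
`E[(φ*(X)/p_X(X)) · sgn(f(X)+Z−T)] = (1/c) ⟨f, φ⟩`. -/
theorem stmt0
    {d : ℕ} {D : Set (Fin d → ℝ)} (hDcomp : IsCompact D)
    (hDpos : 0 < volume D) (hDfin : volume D < ⊤)
    {a b c : ℝ} (ha : 0 < a) (hb : 0 < b) (hc : c = a + b)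
    {f : (Fin d → ℝ) → ℝ} (hfmeas : Measurable f)
    (hfbd : ∀ x ∈ D, f x ∈ Set.Icc (-a) a)
    {pX : (Fin d → ℝ) → ℝ} (hpXmeas : Measurable pX)
    (hpXpos : ∀ x ∈ D, 0 < pX x) (hpXone : (∫ x in D, pX x) = 1)
    {φ : (Fin d → ℝ) → ℂ} (hφmeas : Measurable φ)
    (hφL2 : MemLp φ 2 (volume.restrict D))
    {Ω : Type*} [MeasurableSpace Ω] (P : Measure Ω) [IsProbabilityMeasure P]
    (X : Ω → (Fin d → ℝ)) (Z T : Ω → ℝ)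
    (hXmeas : Measurable X) (hZmeas : Measurable Z) (hTmeas : Measurable T)
    (μZ : Measure ℝ) [IsProbabilityMeasure μZ]
    (hZmean : (∫ z, z ∂μZ) = 0) (hZsupp : μZ (Set.Icc (-b) b)ᶜ = 0)
    (hlaw : Measure.map (fun ω => (X ω, Z ω, T ω)) P =
      (deployLaw D pX).prod (μZ.prod (threshLaw c))) :
    (∫ ω, (starRingEnd ℂ) (φ (X ω)) / (pX (X ω) : ℂ) * (sgn' (f (X ω) + Z ω - T ω) : ℂ) ∂P)
      = (1 / (c : ℂ)) * ∫ x in D, (f x : ℂ) * (starRingEnd ℂ) (φ x) := by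
  have hDmeas : MeasurableSet D := hDcomp.isClosed.measurableSet
  have hc0 : 0 < c := by rw [hc]; positivity
  haveI hfinD : IsFiniteMeasure (volume.restrict D) :=
    ⟨by simpa using hDfin⟩
  have hpXint : IntegrableOn pX D := by
    by_contra h
    rw [MeasureTheory.integral_undef h] at hpXone
    norm_num at hpXone
  have hDae : ∀ᵐ x ∂(volume.restrict D), x ∈ D := ae_restrict_mem hDmeas
  haveI hfin1 : IsFiniteMeasure (deployLaw D pX) := by
    constructor
    rw [deployLaw, withDensity_apply _ MeasurableSet.univ, Measure.restrict_univ]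
    rw [← ofReal_integral_eq_lintegral_ofReal hpXint
      (by filter_upwards [hDae] with x hx; exact (hpXpos x hx).le)]
    exact ENNReal.ofReal_lt_top
  haveI hfin3 : IsFiniteMeasure (threshLaw c) := by
    constructor
    rw [threshLaw]
    simp only [Measure.smul_apply, Measure.restrict_apply MeasurableSet.univ,
      Set.univ_inter, Real.volume_Icc, smul_eq_mul]
    exact ENNReal.mul_lt_top ENNReal.ofReal_lt_top ENNReal.ofReal_lt_top
  set μ23 := μZ.prod (threshLaw c) with hμ23
  set C : (Fin d → ℝ) → ℂ := fun x => (starRingEnd ℂ) (φ x) / (pX x : ℂ) with hC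
  set G : (Fin d → ℝ) × ℝ × ℝ → ℂ :=
    fun p => C p.1 * (sgn' (f p.1 + p.2.1 - p.2.2) : ℂ) with hGdef
  have hCmeas : Measurable C := by
    apply Measurable.div
    · exact Complex.continuous_conj.measurable.comp hφmeas
    · exact Complex.measurable_ofReal.comp hpXmeas
  have hGmeas : Measurable G := by
    apply (hCmeas.comp measurable_fst).mul
    apply Complex.measurable_ofReal.comp
    apply sgn'_meas.comp
    exact ((hfmeas.comp measurable_fst).add
      (measurable_fst.comp measurable_snd)).sub (measurable_snd.comp measurable_snd)
  have hZae : ∀ᵐ z ∂μZ, z ∈ Set.Icc (-b) b := by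
    rw [ae_iff]; exact hZsupp
  have hZint : Integrable (fun z => z) μZ := by
    refine (integrable_const b).mono' measurable_id.aestronglyMeasurable ?_
    filter_upwards [hZae] with z hz
    rw [Real.norm_eq_abs, abs_le]; exact ⟨hz.1, hz.2⟩
  have hslice : ∀ x : Fin d → ℝ, Integrable (fun q : ℝ × ℝ => G (x, q)) μ23 := by
    intro x
    have hb' : Integrable (fun q : ℝ × ℝ => (sgn' (f x + q.1 - q.2) : ℂ)) μ23 := by
      refine (integrable_const (1 : ℝ)).mono' ?_ ?_
      · exact (Complex.measurable_ofReal.comp (sgn'_meas.comp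
          ((measurable_const.add measurable_fst).sub measurable_snd))).aestronglyMeasurable
      · exact Filter.Eventually.of_forall fun q => (sgn'_norm_eq _).le
    exact hb'.const_mul (C x)
  have hGint : Integrable G ((deployLaw D pX).prod μ23) := by
    rw [integrable_prod_iff hGmeas.aestronglyMeasurable]
    constructor
    · exact Filter.Eventually.of_forall hslice
    · have key : (fun x => ∫ q, ‖G (x, q)‖ ∂μ23)
          = fun x => (μ23 Set.univ).toReal * ‖C x‖ := by
        funext x
        have : (fun q : ℝ × ℝ => ‖G (x, q)‖) = fun _ => ‖C x‖ := by
          funext q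
          rw [hGdef]
          simp [norm_mul, sgn'_norm_eq, sgn'_abs]
        rw [this, integral_const, smul_eq_mul, measureReal_def]
      rw [key]
      apply Integrable.const_mul
      rw [deployLaw, integrable_withDensity_iff hpXmeas.ennreal_ofReal
        (Filter.Eventually.of_forall fun x => ENNReal.ofReal_lt_top)]
      refine (hφL2.integrable one_le_two).norm.congr ?_
      filter_upwards [hDae] with x hx
      have hp := hpXpos x hx
      rw [ENNReal.toReal_ofReal hp.le, hC]
      simp only [norm_div, RCLike.norm_conj, Complex.norm_real, Real.norm_eq_abs,
        abs_of_pos hp]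
      field_simp
  have hcne : (c : ℂ) ≠ 0 := Complex.ofReal_ne_zero.mpr hc0.ne'
  calc (∫ ω, (starRingEnd ℂ) (φ (X ω)) / (pX (X ω) : ℂ)
        * (sgn' (f (X ω) + Z ω - T ω) : ℂ) ∂P)
      = ∫ ω, G (X ω, Z ω, T ω) ∂P := rfl
    _ = ∫ p, G p ∂((deployLaw D pX).prod μ23) := by
        rw [← hlaw]
        exact (integral_map (hXmeas.prodMk (hZmeas.prodMk hTmeas)).aemeasurable
          hGmeas.aestronglyMeasurable).symm
    _ = ∫ x, ∫ q, G (x, q) ∂μ23 ∂(deployLaw D pX) := integral_prod G hGint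
    _ = ∫ x, C x * ((f x / c : ℝ) : ℂ) ∂(deployLaw D pX) := by
        apply integral_congr_ae
        filter_upwards [(withDensity_absolutelyContinuous (volume.restrict D) _).ae_le hDae]
          with x hx
        have hfx := hfbd x hx
        calc ∫ q, G (x, q) ∂μ23
            = ∫ z, ∫ t, G (x, z, t) ∂(threshLaw c) ∂μZ :=
              integral_prod _ (hslice x)
          _ = ∫ z, C x * ((∫ t, sgn' (f x + z - t) ∂(threshLaw c) : ℝ) : ℂ) ∂μZ := by
              refine integral_congr_ae (Filter.Eventually.of_forall fun z => ?_)
              rw [hGdef]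
              simp only []
              rw [integral_const_mul]
              congr 1
              exact integral_ofReal
          _ = ∫ z, C x * (((f x + z) / c : ℝ) : ℂ) ∂μZ := by
              apply integral_congr_ae
              filter_upwards [hZae] with z hz
              congr 2
              exact lemA hc0 (by rw [hc]; linarith [hfx.1, hz.1])
                (by rw [hc]; linarith [hfx.2, hz.2])
          _ = C x * ((f x / c : ℝ) : ℂ) := by
              rw [integral_const_mul]
              congr 1
              have h0 : ∫ z, (f x + z) / c ∂μZ = f x / c := by
                rw [MeasureTheory.integral_div, integral_add (integrable_const _) hZint,
                  integral_const, hZmean]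
                simp [measure_univ]
              rw [← h0]
              exact integral_ofReal
    _ = (1 / (c : ℂ)) * ∫ x in D, (f x : ℂ) * (starRingEnd ℂ) (φ x) := by
        have hd : deployLaw D pX
            = (volume.restrict D).withDensity
              fun x => ((fun x => (pX x).toNNReal) x : ℝ≥0∞) := rfl
        rw [hd, integral_withDensity_eq_integral_smul
          hpXmeas.real_toNNReal _]
        rw [← integral_const_mul]
        apply integral_congr_ae
        filter_upwards [hDae] with x hx
        have hp := hpXpos x hx
        have hpne : (pX x : ℂ) ≠ 0 := Complex.ofReal_ne_zero.mpr hp.ne'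
        rw [NNReal.smul_def, Real.coe_toNNReal _ hp.le, Complex.real_smul, hC]
        simp only []
        push_cast
        field_simp
end

section
/- Let {φ_j}_{j=0}^∞ be an orthonormal basis of L²(D), p_X a density on D with inf_{x∈D} p_X(x) = ν > 0, and {Λ_m} a non-negative increasing sequence with m / Λ_m² → 0 as m → ∞. Define g_m(x, y) = (1/Λ_m) Σ_{j=0}^{m−1} φ_j(x) φ_j*(y) / p_X(y). If for almost every (x, y) ∈ D × D the limit g_∞(x, y) = lim_{m→∞} g_m(x, y) exists, then g_∞(x, y) = 0 for almost every (x, y) ∈ D × D. -/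
open MeasureTheory ProbabilityTheory Filter
open scoped ENNReal Topology

lemma int_mul {α : Type*} [MeasurableSpace α] {μ : Measure α} {f g : α → ℂ}
    (hf : MemLp f 2 μ) (hg : MemLp g 2 μ) : Integrable (fun x => f x * g x) μ := by
  rw [← memLp_one_iff_integrable]
  have h := hg.smul (φ := f) hf (r := 1)
  exact h

lemma memLp_conj {α : Type*} [MeasurableSpace α] {μ : Measure α} {f : α → ℂ}
    (hf : MemLp f 2 μ) : MemLp (fun x => (starRingEnd ℂ) (f x)) 2 μ := by
  refine MemLp.of_le hf ?_ (Eventually.of_forall fun x => by simp)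
  exact (Complex.continuous_conj.comp_aestronglyMeasurable hf.1)

lemma ortho_sum {d : ℕ} {D : Set (Fin d → ℝ)} {φ : ℕ → (Fin d → ℝ) → ℂ}
    (hφL2 : ∀ j, MemLp (φ j) 2 (volume.restrict D))
    (hON : ∀ j k, (∫ x in D, φ j x * (starRingEnd ℂ) (φ k x)) = if j = k then 1 else 0)
    (m : ℕ) (a : ℕ → ℂ) :
    ∫ x in D, ‖∑ j ∈ Finset.range m, a j * φ j x‖ ^ 2
      = ∑ j ∈ Finset.range m, ‖a j‖ ^ 2 := by
  set w : (Fin d → ℝ) → ℂ := fun x => ∑ j ∈ Finset.range m, a j * φ j x with hw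
  have hwL2 : MemLp w 2 (volume.restrict D) := by
    exact memLp_finset_sum (Finset.range m) fun j _ => (hφL2 j).const_mul (a j)
  have hint : Integrable (fun x => w x * (starRingEnd ℂ) (w x)) (volume.restrict D) :=
    int_mul hwL2 (memLp_conj hwL2)
  have hintjk : ∀ j k, Integrable
      (fun x => a j * (starRingEnd ℂ) (a k) * (φ j x * (starRingEnd ℂ) (φ k x)))
      (volume.restrict D) := fun j k =>
    (int_mul (hφL2 j) (memLp_conj (hφL2 k))).const_mul _
  have key : (∫ x in D, w x * (starRingEnd ℂ) (w x))
      = ∑ j ∈ Finset.range m, a j * (starRingEnd ℂ) (a j) := by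
    have hexp : ∀ x, w x * (starRingEnd ℂ) (w x)
        = ∑ j ∈ Finset.range m, ∑ k ∈ Finset.range m,
            a j * (starRingEnd ℂ) (a k) * (φ j x * (starRingEnd ℂ) (φ k x)) := by
      intro x
      simp only [hw, map_sum, map_mul, Finset.sum_mul_sum]
      congr 1; ext j; congr 1; ext k; ring
    calc (∫ x in D, w x * (starRingEnd ℂ) (w x))
        = ∫ x in D, ∑ j ∈ Finset.range m, ∑ k ∈ Finset.range m,
            a j * (starRingEnd ℂ) (a k) * (φ j x * (starRingEnd ℂ) (φ k x)) := by
          simp_rw [hexp]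
      _ = ∑ j ∈ Finset.range m, ∑ k ∈ Finset.range m,
            ∫ x in D, a j * (starRingEnd ℂ) (a k) * (φ j x * (starRingEnd ℂ) (φ k x)) := by
          rw [integral_finset_sum]
          · exact Finset.sum_congr rfl fun j _ => integral_finset_sum _ fun k _ => hintjk j k
          · intro j _
            exact integrable_finset_sum _ fun k _ => hintjk j k
      _ = ∑ j ∈ Finset.range m, ∑ k ∈ Finset.range m,
            a j * (starRingEnd ℂ) (a k) * (if j = k then 1 else 0) := by
          refine Finset.sum_congr rfl fun j _ => Finset.sum_congr rfl fun k _ => ?_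
          rw [integral_const_mul, hON j k]
      _ = ∑ j ∈ Finset.range m, a j * (starRingEnd ℂ) (a j) := by
          refine Finset.sum_congr rfl fun j hj => ?_
          rw [Finset.sum_eq_single j]
          · simp
          · intro k _ hk; simp [Ne.symm hk]
          · intro h; exact absurd hj h
  have hre : ∀ z : ℂ, ‖z‖ ^ 2 = (z * (starRingEnd ℂ) z).re := by
    intro z
    rw [Complex.mul_conj]
    simp [Complex.normSq_eq_norm_sq, ← Complex.ofReal_pow]
  calc (∫ x in D, ‖w x‖ ^ 2)
      = ∫ x in D, (w x * (starRingEnd ℂ) (w x)).re := by simp_rw [hre]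
    _ = (∫ x in D, w x * (starRingEnd ℂ) (w x)).re := integral_re hint
    _ = (∑ j ∈ Finset.range m, a j * (starRingEnd ℂ) (a j)).re := by rw [key]
    _ = ∑ j ∈ Finset.range m, ‖a j‖ ^ 2 := by
        rw [Complex.re_sum]
        exact Finset.sum_congr rfl fun j _ => (hre (a j)).symm

lemma inner_lint {d : ℕ} {D : Set (Fin d → ℝ)} {φ : ℕ → (Fin d → ℝ) → ℂ}
    (hφL2 : ∀ j, MemLp (φ j) 2 (volume.restrict D))
    (hON : ∀ j k, (∫ x in D, φ j x * (starRingEnd ℂ) (φ k x)) = if j = k then 1 else 0)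
    (m : ℕ) (a : ℕ → ℂ) :
    ∫⁻ x, (‖∑ j ∈ Finset.range m, a j * φ j x‖₊ : ℝ≥0∞) ^ 2 ∂(volume.restrict D)
      = ENNReal.ofReal (∑ j ∈ Finset.range m, ‖a j‖ ^ 2) := by
  set w : (Fin d → ℝ) → ℂ := fun x => ∑ j ∈ Finset.range m, a j * φ j x with hw
  have hwL2 : MemLp w 2 (volume.restrict D) :=
    memLp_finset_sum (Finset.range m) fun j _ => (hφL2 j).const_mul (a j)
  have hi : Integrable (fun x => ‖w x‖ ^ 2) (volume.restrict D) :=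
    (memLp_two_iff_integrable_sq_norm hwL2.1).1 hwL2
  have h1 : ∀ z : ℂ, (‖z‖₊ : ℝ≥0∞) ^ 2 = ENNReal.ofReal (‖z‖ ^ 2) := fun z => by
    rw [ENNReal.ofReal_pow (norm_nonneg z), ofReal_norm, enorm_eq_nnnorm]
  calc ∫⁻ x, (‖w x‖₊ : ℝ≥0∞) ^ 2 ∂(volume.restrict D)
      = ∫⁻ x, ENNReal.ofReal (‖w x‖ ^ 2) ∂(volume.restrict D) := by simp_rw [h1]
    _ = ENNReal.ofReal (∫ x in D, ‖w x‖ ^ 2) :=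
        (ofReal_integral_eq_lintegral_ofReal hi
          (Eventually.of_forall fun x => by positivity)).symm
    _ = ENNReal.ofReal (∑ j ∈ Finset.range m, ‖a j‖ ^ 2) := by
        rw [ortho_sum hφL2 hON m a]

lemma phi_sq_lint {d : ℕ} {D : Set (Fin d → ℝ)} {φ : ℕ → (Fin d → ℝ) → ℂ}
    (hφL2 : ∀ j, MemLp (φ j) 2 (volume.restrict D))
    (hON : ∀ j k, (∫ x in D, φ j x * (starRingEnd ℂ) (φ k x)) = if j = k then 1 else 0)
    (j : ℕ) :
    ∫⁻ y, ENNReal.ofReal (‖φ j y‖ ^ 2) ∂(volume.restrict D) = 1 := by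
  have hi : Integrable (fun x => ‖φ j x‖ ^ 2) (volume.restrict D) :=
    (memLp_two_iff_integrable_sq_norm (hφL2 j).1).1 (hφL2 j)
  have hre : ∀ z : ℂ, ‖z‖ ^ 2 = (z * (starRingEnd ℂ) z).re := by
    intro z
    rw [Complex.mul_conj]
    simp [Complex.normSq_eq_norm_sq, ← Complex.ofReal_pow]
  have hval : (∫ x in D, ‖φ j x‖ ^ 2) = 1 := by
    calc (∫ x in D, ‖φ j x‖ ^ 2)
        = ∫ x in D, (φ j x * (starRingEnd ℂ) (φ j x)).re := by simp_rw [hre]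
      _ = (∫ x in D, φ j x * (starRingEnd ℂ) (φ j x)).re :=
          integral_re (int_mul (hφL2 j) (memLp_conj (hφL2 j)))
      _ = 1 := by rw [hON j j]; simp
  rw [← ofReal_integral_eq_lintegral_ofReal hi (Eventually.of_forall fun x => by positivity),
    hval, ENNReal.ofReal_one]



section Main

variable {d : ℕ} {D : Set (Fin d → ℝ)} {φ : ℕ → (Fin d → ℝ) → ℂ}
  {pX : (Fin d → ℝ) → ℝ} {ν : ℝ} {Λ : ℕ → ℝ}

theorem stmt10'
    (hDcomp : IsCompact D)
    (hφmeas : ∀ j, Measurable (φ j))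
    (hφL2 : ∀ j, MemLp (φ j) 2 (volume.restrict D))
    (hON : ∀ j k, (∫ x in D, φ j x * (starRingEnd ℂ) (φ k x)) = if j = k then 1 else 0)
    (hpXmeas : Measurable pX)
    (hν : 0 < ν) (hνinf : ∀ x ∈ D, ν ≤ pX x)
    (hΛ0 : ∀ m, 0 ≤ Λ m)
    (hΛ : Tendsto (fun m : ℕ => (m : ℝ) / (Λ m) ^ 2) atTop (𝓝 0))
    (gInf : (Fin d → ℝ) × (Fin d → ℝ) → ℂ)
    (hlim : ∀ᵐ p ∂((volume.restrict D).prod (volume.restrict D)),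
      Tendsto (fun m : ℕ => (1 / (Λ m : ℂ)) *
          ∑ j ∈ Finset.range m, φ j p.1 * (starRingEnd ℂ) (φ j p.2) / (pX p.2 : ℂ))
        atTop (𝓝 (gInf p))) :
    ∀ᵐ p ∂((volume.restrict D).prod (volume.restrict D)), gInf p = 0 := by
  classical
  set μ : Measure (Fin d → ℝ) := volume.restrict D with hμ
  set G : ℕ → (Fin d → ℝ) × (Fin d → ℝ) → ℂ := fun m p =>
    (1 / (Λ m : ℂ)) * ∑ j ∈ Finset.range m, φ j p.1 * (starRingEnd ℂ) (φ j p.2) / (pX p.2 : ℂ)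
    with hG
  set F : ℕ → (Fin d → ℝ) × (Fin d → ℝ) → ℝ≥0∞ := fun m p => (‖G m p‖₊ : ℝ≥0∞) ^ 2 with hF
  have hGmeas : ∀ m, Measurable (G m) := by
    intro m
    apply Measurable.const_mul
    apply Finset.measurable_sum
    intro j _
    exact (((hφmeas j).comp measurable_fst).mul
        (Complex.continuous_conj.measurable.comp ((hφmeas j).comp measurable_snd))).div
      (Complex.measurable_ofReal.comp (hpXmeas.comp measurable_snd))
  have hFmeas : ∀ m, Measurable (F m) := fun m =>
    ((hGmeas m).nnnorm.coe_nnreal_ennreal).pow_const 2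
  -- the coefficient function
  set a : ℕ → ℕ → (Fin d → ℝ) → ℂ := fun m j y =>
    (1 / (Λ m : ℂ)) * ((starRingEnd ℂ) (φ j y) / (pX y : ℂ)) with ha
  have hrepr : ∀ m y x, G m (x, y) = ∑ j ∈ Finset.range m, a m j y * φ j x := by
    intro m y x
    simp only [hG, ha, Finset.mul_sum]
    exact Finset.sum_congr rfl fun j _ => by ring
  -- bound on coefficients for y ∈ D
  have hcoef : ∀ m y, y ∈ D → ∀ j,
      ‖a m j y‖ ^ 2 ≤ (Λ m)⁻¹ ^ 2 * ν⁻¹ ^ 2 * ‖φ j y‖ ^ 2 := by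
    intro m y hy j
    have hpy : ν ≤ pX y := hνinf y hy
    have hpy0 : 0 < pX y := lt_of_lt_of_le hν hpy
    have h1 : ‖a m j y‖ = (Λ m)⁻¹ * (‖φ j y‖ * (pX y)⁻¹) := by
      simp [ha, norm_div, Complex.norm_real, abs_of_nonneg (hΛ0 m), abs_of_pos hpy0,
        div_eq_mul_inv]
    rw [h1]
    have h2 : (pX y)⁻¹ ≤ ν⁻¹ := inv_anti₀ hν hpy
    have h3 : (0:ℝ) ≤ (pX y)⁻¹ := by positivity
    have h4 : ((pX y)⁻¹) ^ 2 ≤ (ν⁻¹) ^ 2 := pow_le_pow_left₀ h3 h2 2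
    have h5 : ‖φ j y‖ ^ 2 * (pX y)⁻¹ ^ 2 ≤ ‖φ j y‖ ^ 2 * ν⁻¹ ^ 2 :=
      mul_le_mul_of_nonneg_left h4 (sq_nonneg _)
    calc ((Λ m)⁻¹ * (‖φ j y‖ * (pX y)⁻¹)) ^ 2
        = (Λ m)⁻¹ ^ 2 * (‖φ j y‖ ^ 2 * (pX y)⁻¹ ^ 2) := by ring
      _ ≤ (Λ m)⁻¹ ^ 2 * (‖φ j y‖ ^ 2 * ν⁻¹ ^ 2) := mul_le_mul_of_nonneg_left h5 (sq_nonneg _)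
      _ = (Λ m)⁻¹ ^ 2 * ν⁻¹ ^ 2 * ‖φ j y‖ ^ 2 := by ring

  have hbound : ∀ m, (∫⁻ p, F m p ∂(μ.prod μ))
      ≤ ENNReal.ofReal ((m : ℝ) / (Λ m) ^ 2 * ν⁻¹ ^ 2) := by
    intro m
    rw [lintegral_prod_symm _ (hFmeas m).aemeasurable]
    have hin : ∀ y, (∫⁻ x, F m (x, y) ∂μ)
        = ENNReal.ofReal (∑ j ∈ Finset.range m, ‖a m j y‖ ^ 2) := by
      intro y
      have hx : ∀ x, F m (x, y) = (‖∑ j ∈ Finset.range m, a m j y * φ j x‖₊ : ℝ≥0∞) ^ 2 := by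
        intro x
        simp only [hF]
        rw [hrepr m y x]
      simp_rw [hx]
      exact inner_lint hφL2 hON m (fun j => a m j y)
    have hφmeas2 : ∀ j, Measurable (fun y => ENNReal.ofReal (‖φ j y‖ ^ 2)) := fun j =>
      (((hφmeas j).norm).pow_const 2).ennreal_ofReal
    calc (∫⁻ y, ∫⁻ x, F m (x, y) ∂μ ∂μ)
        = ∫⁻ y, ENNReal.ofReal (∑ j ∈ Finset.range m, ‖a m j y‖ ^ 2) ∂μ := by
          simp_rw [hin]
      _ ≤ ∫⁻ y, ENNReal.ofReal ((Λ m)⁻¹ ^ 2 * ν⁻¹ ^ 2) *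
            (∑ j ∈ Finset.range m, ENNReal.ofReal (‖φ j y‖ ^ 2)) ∂μ := by
          apply lintegral_mono_ae
          filter_upwards [self_mem_ae_restrict hDcomp.isClosed.measurableSet] with y hy
          calc ENNReal.ofReal (∑ j ∈ Finset.range m, ‖a m j y‖ ^ 2)
              ≤ ENNReal.ofReal (∑ j ∈ Finset.range m,
                  (Λ m)⁻¹ ^ 2 * ν⁻¹ ^ 2 * ‖φ j y‖ ^ 2) :=
                ENNReal.ofReal_le_ofReal (Finset.sum_le_sum fun j _ => hcoef m y hy j)
            _ = ENNReal.ofReal ((Λ m)⁻¹ ^ 2 * ν⁻¹ ^ 2) *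
                  ∑ j ∈ Finset.range m, ENNReal.ofReal (‖φ j y‖ ^ 2) := by
                rw [← Finset.mul_sum, ENNReal.ofReal_mul (by positivity),
                  ENNReal.ofReal_sum_of_nonneg (fun j _ => by positivity)]
      _ = ENNReal.ofReal ((Λ m)⁻¹ ^ 2 * ν⁻¹ ^ 2) *
            ∑ j ∈ Finset.range m, ∫⁻ y, ENNReal.ofReal (‖φ j y‖ ^ 2) ∂μ := by
          rw [lintegral_const_mul _ (Finset.measurable_sum _ fun j _ => hφmeas2 j),
            lintegral_finset_sum _ fun j _ => hφmeas2 j]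
      _ = ENNReal.ofReal ((Λ m)⁻¹ ^ 2 * ν⁻¹ ^ 2) * m := by
          have : ∀ j ∈ Finset.range m,
              (∫⁻ y, ENNReal.ofReal (‖φ j y‖ ^ 2) ∂μ) = 1 := fun j _ =>
            phi_sq_lint hφL2 hON j
          rw [Finset.sum_congr rfl this]
          simp
      _ ≤ ENNReal.ofReal ((m : ℝ) / (Λ m) ^ 2 * ν⁻¹ ^ 2) := by
          rw [← ENNReal.ofReal_natCast m, ← ENNReal.ofReal_mul (by positivity)]
          apply ENNReal.ofReal_le_ofReal
          rw [div_eq_mul_inv, ← inv_pow]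
          apply le_of_eq
          ring
  have hBtend : Tendsto (fun m : ℕ => ENNReal.ofReal ((m : ℝ) / (Λ m) ^ 2 * ν⁻¹ ^ 2))
      atTop (𝓝 0) := by
    have h := hΛ.mul_const (ν⁻¹ ^ 2)
    rw [zero_mul] at h
    simpa using ENNReal.tendsto_ofReal h
  have hlim0 : liminf (fun m => ∫⁻ p, F m p ∂(μ.prod μ)) atTop = 0 := by
    refine le_antisymm ?_ zero_le
    calc liminf (fun m => ∫⁻ p, F m p ∂(μ.prod μ)) atTop
        ≤ liminf (fun m : ℕ => ENNReal.ofReal ((m : ℝ) / (Λ m) ^ 2 * ν⁻¹ ^ 2)) atTop :=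
          liminf_le_liminf (Eventually.of_forall hbound)
      _ = 0 := hBtend.liminf_eq
  have hFatou : (∫⁻ p, liminf (fun m => F m p) atTop ∂(μ.prod μ)) = 0 := by
    refine le_antisymm ?_ zero_le
    rw [← hlim0]
    exact lintegral_liminf_le hFmeas
  have hae : ∀ᵐ p ∂(μ.prod μ), liminf (fun m => F m p) atTop = 0 := by
    have hm : Measurable (fun p => liminf (fun m => F m p) atTop) :=
      Measurable.liminf hFmeas
    filter_upwards [(lintegral_eq_zero_iff hm).1 hFatou] with p hp using hp
  filter_upwards [hlim, hae] with p hTend hLim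
  have hFt : Tendsto (fun m => F m p) atTop (𝓝 ((‖gInf p‖₊ : ℝ≥0∞) ^ 2)) := by
    have h1 : Tendsto (fun m => G m p) atTop (𝓝 (gInf p)) := hTend
    have h2 : Tendsto (fun m => ‖G m p‖₊ ^ 2) atTop (𝓝 (‖gInf p‖₊ ^ 2)) :=
      (h1.nnnorm).pow 2
    have h3 := ENNReal.tendsto_coe.2 h2
    simpa [hF, ENNReal.coe_pow] using h3
  have hz : (‖gInf p‖₊ : ℝ≥0∞) ^ 2 = 0 := by rw [← hFt.liminf_eq]; exact hLim
  simpa using hz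

end Main

/-- **Proposition 1(i), part `g`:** if `m/Λ_m² → 0` and the limit
`g_∞(x,y) = lim_m (1/Λ_m) ∑_(j<m) φ_j(x) φ_j*(y)/p_X(y)` exists a.e., it is `0` a.e. -/
theorem stmt10
    {d : ℕ} {D : Set (Fin d → ℝ)} (hDcomp : IsCompact D)
    (hDpos : 0 < volume D) (hDfin : volume D < ⊤)
    {φ : ℕ → (Fin d → ℝ) → ℂ} (hφmeas : ∀ j, Measurable (φ j))
    (hφL2 : ∀ j, MemLp (φ j) 2 (volume.restrict D))
    (hON : ∀ j k, (∫ x in D, φ j x * (starRingEnd ℂ) (φ k x)) = if j = k then 1 else 0)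
    (hComplete : ∀ g : (Fin d → ℝ) → ℂ, Measurable g → MemLp g 2 (volume.restrict D) →
      (∑' j : ℕ, ‖∫ x in D, g x * (starRingEnd ℂ) (φ j x)‖ ^ 2) = ∫ x in D, ‖g x‖ ^ 2)
    {pX : (Fin d → ℝ) → ℝ} (hpXmeas : Measurable pX)
    (hpXpos : ∀ x ∈ D, 0 < pX x) (hpXone : (∫ x in D, pX x) = 1)
    {ν : ℝ} (hν : 0 < ν) (hνinf : ∀ x ∈ D, ν ≤ pX x)
    (Λ : ℕ → ℝ) (hΛ0 : ∀ m, 0 ≤ Λ m) (hΛmono : Monotone Λ)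
    (hΛ : Tendsto (fun m : ℕ => (m : ℝ) / (Λ m) ^ 2) atTop (𝓝 0))
    (gInf : (Fin d → ℝ) × (Fin d → ℝ) → ℂ)
    (hlim : ∀ᵐ p ∂((volume.restrict D).prod (volume.restrict D)),
      Tendsto (fun m : ℕ => (1 / (Λ m : ℂ)) *
          ∑ j ∈ Finset.range m, φ j p.1 * (starRingEnd ℂ) (φ j p.2) / (pX p.2 : ℂ))
        atTop (𝓝 (gInf p))) :
    ∀ᵐ p ∂((volume.restrict D).prod (volume.restrict D)), gInf p = 0 := by
  exact stmt10' hDcomp hφmeas hφL2 hON hpXmeas hν hνinf hΛ0 hΛ gInf hlim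
end
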